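/- Let X be a chain and let α, β be orientation-preserving partial transformations of X. Then, in the monoid POP(X): (1) α and β are L-related (i.e. there exist γ, λ ∈ POP(X) with α = γβ and β = λα, composition written left-to-right with the left factor applied first) if and only if Im(α) = Im(β); (2) α and β are R-related (i.e. there exist γ, λ ∈ POP(X) with α = βγ and β = αλ) if and only if Ker(α) = Ker(β); (3) α and β are H-related (both L-related and R-related) if and only if Im(α) = Im(β) and Ker(α) = Ker(β). -/

import Mathlib

variable {X : Type*}

/-- The partial transformation `f` is order-preserving on the subset `A` of its domain. -/
def IsOrdOn [LinearOrder X] (f : X →. X) (A : Set X) : Prop :=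
  ∀ ⦃x y u v : X⦄, x ∈ A → y ∈ A → x ≤ y → u ∈ f x → v ∈ f y → u ≤ v

/-- `Y` is an ideal of the partial transformation `f`: a nonempty subset of the domain such
that `f` is order-preserving on `Y` and on `Dom f \ Y`, and every element of `Y` is below every
element of `Dom f \ Y` while its image is above. -/
def IsIdeal [LinearOrder X] (f : X →. X) (Y : Set X) : Prop :=
  Y.Nonempty ∧ Y ⊆ f.Dom ∧ IsOrdOn f Y ∧ IsOrdOn f (f.Dom \ Y) ∧
    ∀ ⦃a b u v : X⦄, a ∈ Y → b ∈ f.Dom \ Y → u ∈ f a → v ∈ f b → a ≤ b ∧ v ≤ u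

/-- `f` is an orientation-preserving partial transformation: it is the empty transformation
or it admits an ideal. -/
def IsOP [LinearOrder X] (f : X →. X) : Prop :=
  f.Dom = ∅ ∨ ∃ Y : Set X, IsIdeal f Y

section Aux

variable [LinearOrder X]

lemma mem_pcomp {f g : X →. X} {x y : X} :
    y ∈ g.comp f x ↔ ∃ z, z ∈ f x ∧ y ∈ g z := by
  simp [PFun.comp_apply, Part.mem_bind_iff]
  exact Part.mem_bind_iff

lemma dom_pcomp {f g : X →. X} {x : X} :
    x ∈ (g.comp f).Dom ↔ ∃ z, z ∈ f x ∧ z ∈ g.Dom := by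
  rw [PFun.mem_dom]
  constructor
  · rintro ⟨y, hy⟩
    obtain ⟨z, hz, hyz⟩ := mem_pcomp.1 hy
    exact ⟨z, hz, (g.mem_dom z).2 ⟨y, hyz⟩⟩
  · rintro ⟨z, hz, hzd⟩
    obtain ⟨y, hy⟩ := (g.mem_dom z).1 hzd
    exact ⟨y, mem_pcomp.2 ⟨z, hz, hy⟩⟩

lemma IsOrdOn.mono {f : X →. X} {A B : Set X} (h : IsOrdOn f A) (hBA : B ⊆ A) :
    IsOrdOn f B := fun _ _ _ _ hx hy => h (hBA hx) (hBA hy)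

/-- Selection of a preimage for each value of `f`, preferring preimages in `Y`. -/
noncomputable def pick (f : X →. X) (Y : Set X) (v : X) : X := by
  classical
  exact if hy : ∃ y, y ∈ Y ∧ v ∈ f y then hy.choose
    else if h : ∃ y, v ∈ f y then h.choose else v

/-- The preimage-selection partial transformation of `f` (preferring preimages in `Y`),
with domain the range of `f`. -/
noncomputable def sel (f : X →. X) (Y : Set X) : X →. X :=
  fun v => ⟨v ∈ f.ran, fun _ => pick f Y v⟩

lemma sel_dom (f : X →. X) (Y : Set X) : (sel f Y).Dom = f.ran := rfl

lemma mem_sel {f : X →. X} {Y : Set X} {v z : X} :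
    z ∈ sel f Y v ↔ v ∈ f.ran ∧ z = pick f Y v := by
  constructor
  · rintro ⟨h, rfl⟩; exact ⟨h, rfl⟩
  · rintro ⟨h, rfl⟩; exact ⟨h, rfl⟩

lemma pick_mem {f : X →. X} {Y : Set X} {v : X} (h : v ∈ f.ran) :
    v ∈ f (pick f Y v) := by
  unfold pick
  split_ifs with h1 h2
  · exact h1.choose_spec.2
  · exact h2.choose_spec
  · obtain ⟨a, ha⟩ := h
    exact absurd ⟨a, ha⟩ h2

lemma pick_dom {f : X →. X} {Y : Set X} {v : X} (h : v ∈ f.ran) :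
    pick f Y v ∈ f.Dom :=
  (f.mem_dom _).2 ⟨v, pick_mem h⟩

lemma pick_Y_iff {f : X →. X} {Y : Set X} {v : X} (h : v ∈ f.ran) :
    pick f Y v ∈ Y ↔ ∃ y, y ∈ Y ∧ v ∈ f y := by
  unfold pick
  split_ifs with h1 h2
  · exact iff_of_true h1.choose_spec.1 h1
  · exact iff_of_false (fun hc => h1 ⟨h2.choose, hc, h2.choose_spec⟩) h1
  · obtain ⟨a, ha⟩ := h
    exact absurd ⟨a, ha⟩ h2

lemma sel_rev {f : X →. X} {Y : Set X} {v z : X} (h : z ∈ sel f Y v) : v ∈ f z := by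
  obtain ⟨hr, rfl⟩ := mem_sel.1 h
  exact pick_mem hr

lemma sel_isOP_of_ideal {f : X →. X} {Y : Set X} (hY : IsIdeal f Y) :
    IsOP (sel f Y) := by
  obtain ⟨hYne, hYD, hOY, hOC, hXX⟩ := hY
  by_cases hr : f.ran = ∅
  · left; rw [sel_dom, hr]
  right
  have monoY : ∀ v w : X, v ∈ f.ran → w ∈ f.ran → pick f Y v ∈ Y → pick f Y w ∈ Y →
      v ≤ w → pick f Y v ≤ pick f Y w := by
    intro v w hv hw hpv hpw hvw
    by_contra hlt
    push_neg at hlt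
    have h1 : w ≤ v := hOY hpw hpv hlt.le (pick_mem hw) (pick_mem hv)
    have h2 : v = w := le_antisymm hvw h1
    rw [h2] at hlt
    exact lt_irrefl _ hlt
  have monoC : ∀ v w : X, v ∈ f.ran → w ∈ f.ran → pick f Y v ∉ Y → pick f Y w ∉ Y →
      v ≤ w → pick f Y v ≤ pick f Y w := by
    intro v w hv hw hpv hpw hvw
    by_contra hlt
    push_neg at hlt
    have h1 : w ≤ v := hOC ⟨pick_dom hw, hpw⟩ ⟨pick_dom hv, hpv⟩ hlt.le
      (pick_mem hw) (pick_mem hv)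
    have h2 : v = w := le_antisymm hvw h1
    rw [h2] at hlt
    exact lt_irrefl _ hlt
  by_cases hvc : ({v | v ∈ f.ran ∧ pick f Y v ∉ Y} : Set X).Nonempty
  · refine ⟨{v | v ∈ f.ran ∧ pick f Y v ∉ Y}, hvc, fun v hv => hv.1, ?_, ?_, ?_⟩
    · rintro x y u v hx hy hxy hu hv
      obtain ⟨hxr, rfl⟩ := mem_sel.1 hu
      obtain ⟨hyr, rfl⟩ := mem_sel.1 hv
      exact monoC x y hx.1 hy.1 hx.2 hy.2 hxy
    · rintro x y u v ⟨hxd, hxn⟩ ⟨hyd, hyn⟩ hxy hu hv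
      obtain ⟨hxr, rfl⟩ := mem_sel.1 hu
      obtain ⟨hyr, rfl⟩ := mem_sel.1 hv
      have hpx : pick f Y x ∈ Y := by
        by_contra h; exact hxn ⟨hxd, h⟩
      have hpy : pick f Y y ∈ Y := by
        by_contra h; exact hyn ⟨hyd, h⟩
      exact monoY x y hxr hyr hpx hpy hxy
    · rintro a b u v ha ⟨hbd, hbn⟩ hu hv
      obtain ⟨har, rfl⟩ := mem_sel.1 hu
      obtain ⟨hbr, rfl⟩ := mem_sel.1 hv
      have hpb : pick f Y b ∈ Y := by
        by_contra h; exact hbn ⟨hbd, h⟩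
      have := hXX hpb ⟨pick_dom har, ha.2⟩ (pick_mem hbr) (pick_mem har)
      exact ⟨this.2, this.1⟩
  · have hall : ∀ v : X, v ∈ f.ran → pick f Y v ∈ Y := by
      intro v hv; by_contra h; exact hvc ⟨v, hv, h⟩
    refine ⟨f.ran, Set.nonempty_iff_ne_empty.2 hr, ?_, ?_, ?_, ?_⟩
    · rw [sel_dom]
    · rintro x y u v hx hy hxy hu hv
      obtain ⟨hxr, rfl⟩ := mem_sel.1 hu
      obtain ⟨hyr, rfl⟩ := mem_sel.1 hv
      exact monoY x y hxr hyr (hall x hxr) (hall y hyr) hxy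
    · rintro x y u v ⟨hxd, hxn⟩ _ _ _ _
      rw [sel_dom] at hxd
      exact absurd hxd hxn
    · rintro a b u v _ ⟨hbd, hbn⟩ _ _
      rw [sel_dom] at hbd
      exact absurd hbd hbn

lemma exists_sel {f : X →. X} (hf : IsOP f) :
    ∃ s : X →. X, IsOP s ∧ s.Dom = f.ran ∧ ∀ v z, z ∈ s v → v ∈ f z := by
  obtain hf | ⟨Y, hY⟩ := hf
  · refine ⟨sel f ∅, Or.inl ?_, sel_dom f ∅, fun v z hz => sel_rev hz⟩
    rw [sel_dom]
    ext v
    simp only [Set.mem_empty_iff_false, iff_false]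
    rintro ⟨a, ha⟩
    have : a ∈ f.Dom := (f.mem_dom a).2 ⟨v, ha⟩
    rw [hf] at this
    exact this
  · exact ⟨sel f Y, sel_isOP_of_ideal hY, sel_dom f Y, fun v z hz => sel_rev hz⟩

/-- Closure of orientation-preserving partial transformations under composition
(`f` applied first, then `g`). -/
lemma comp_isOP {f g : X →. X} (hf : IsOP f) (hg : IsOP g) : IsOP (g.comp f) := by
  by_cases hD : (g.comp f).Dom = ∅
  · exact Or.inl hD
  right
  obtain ⟨x0, hx0⟩ := Set.nonempty_iff_ne_empty.2 hD
  obtain hf' | ⟨Yf, hYfne, hYfD, fOY, fOC, fX⟩ := hf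
  · exfalso
    obtain ⟨z, hz, _⟩ := dom_pcomp.1 hx0
    have : x0 ∈ f.Dom := (f.mem_dom x0).2 ⟨z, hz⟩
    rw [hf'] at this; exact this
  obtain hg' | ⟨Yg, hYgne, hYgD, gOY, gOC, gX⟩ := hg
  · exfalso
    obtain ⟨z, _, hzd⟩ := dom_pcomp.1 hx0
    rw [hg'] at hzd; exact hzd
  set D := (g.comp f).Dom with hDdef
  have classify : ∀ x, x ∈ D → ∀ z, z ∈ f x → z ∈ g.Dom ∧ x ∈ f.Dom := by
    intro x hx z hz
    obtain ⟨z', hz', hzd⟩ := dom_pcomp.1 hx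
    rw [Part.mem_unique hz hz']
    exact ⟨hzd, (f.mem_dom x).2 ⟨z, hz⟩⟩
  -- incompatibility of a "P1-type" point with a "P4-type" point
  have P14 : ∀ x1, x1 ∈ D → ∀ x4, x4 ∈ D → x1 ∈ Yf → x4 ∉ Yf →
      ∀ u1, u1 ∈ f x1 → ∀ u4, u4 ∈ f x4 → u1 ∈ Yg → u4 ∉ Yg → False := by
    intro x1 h1 x4 h4 hy1 hy4 u1 hu1 u4 hu4 hg1 hg4
    have c1 := classify x1 h1 u1 hu1
    have c4 := classify x4 h4 u4 hu4
    have hf14 := fX hy1 ⟨c4.2, hy4⟩ hu1 hu4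
    obtain ⟨w1, hw1⟩ := (g.mem_dom u1).1 c1.1
    obtain ⟨w4, hw4⟩ := (g.mem_dom u4).1 c4.1
    have hg14 := gX hg1 ⟨c4.1, hg4⟩ hw1 hw4
    have : u1 = u4 := le_antisymm hg14.1 hf14.2
    rw [this] at hg1
    exact hg4 hg1
  -- order-preservation on the set of "P2/P3-type" points
  have ordP23 : IsOrdOn (g.comp f)
      {x | x ∈ D ∧ ((x ∈ Yf ∧ ∃ u, u ∈ f x ∧ u ∉ Yg) ∨
        (x ∉ Yf ∧ ∃ u, u ∈ f x ∧ u ∈ Yg))} := by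
    rintro x y u v ⟨hxD, hxc⟩ ⟨hyD, hyc⟩ hxy hu hv
    obtain ⟨z, hzx, huz⟩ := mem_pcomp.1 hu
    obtain ⟨w, hwy, hvw⟩ := mem_pcomp.1 hv
    have czx := classify x hxD z hzx
    have cwy := classify y hyD w hwy
    rcases hxc with ⟨hxY, z', hz', hz'n⟩ | ⟨hxnY, z', hz', hz'Y⟩
    · rw [Part.mem_unique hz' hzx] at hz'n
      rcases hyc with ⟨hyY, w', hw', hw'n⟩ | ⟨hynY, w', hw', hw'Y⟩
      · rw [Part.mem_unique hw' hwy] at hw'n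
        have hzw : z ≤ w := fOY hxY hyY hxy hzx hwy
        exact gOC ⟨czx.1, hz'n⟩ ⟨cwy.1, hw'n⟩ hzw huz hvw
      · rw [Part.mem_unique hw' hwy] at hw'Y
        exact (gX hw'Y ⟨czx.1, hz'n⟩ hvw huz).2
    · rw [Part.mem_unique hz' hzx] at hz'Y
      rcases hyc with ⟨hyY, w', hw', hw'n⟩ | ⟨hynY, w', hw', hw'Y⟩
      · have := (fX hyY ⟨czx.2, hxnY⟩ hwy hzx).1
        have hxy' : x = y := le_antisymm hxy this
        rw [hxy'] at hxnY
        exact absurd hyY hxnY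
      · rw [Part.mem_unique hw' hwy] at hw'Y
        have hzw : z ≤ w := fOC ⟨czx.2, hxnY⟩ ⟨cwy.2, hynY⟩ hxy hzx hwy
        exact gOY hz'Y hw'Y hzw huz hvw
  -- order-preservation on the set of "P4-type" points
  have ordP4 : IsOrdOn (g.comp f)
      {x | x ∈ D ∧ x ∉ Yf ∧ ∃ u, u ∈ f x ∧ u ∉ Yg} := by
    rintro x y u v ⟨hxD, hxnY, z', hz', hz'n⟩ ⟨hyD, hynY, w', hw', hw'n⟩ hxy hu hv
    obtain ⟨z, hzx, huz⟩ := mem_pcomp.1 hu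
    obtain ⟨w, hwy, hvw⟩ := mem_pcomp.1 hv
    rw [Part.mem_unique hz' hzx] at hz'n
    rw [Part.mem_unique hw' hwy] at hw'n
    have czx := classify x hxD z hzx
    have cwy := classify y hyD w hwy
    have hzw : z ≤ w := fOC ⟨czx.2, hxnY⟩ ⟨cwy.2, hynY⟩ hxy hzx hwy
    exact gOC ⟨czx.1, hz'n⟩ ⟨cwy.1, hw'n⟩ hzw huz hvw
  by_cases hP1 : ({x | x ∈ D ∧ x ∈ Yf ∧ ∃ u, u ∈ f x ∧ u ∈ Yg} : Set X).Nonempty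
  · -- ideal: P1
    obtain ⟨x1, hx1D, hx1Y, u1, hu1, hu1Y⟩ := hP1
    refine ⟨{x | x ∈ D ∧ x ∈ Yf ∧ ∃ u, u ∈ f x ∧ u ∈ Yg}, ⟨x1, hx1D, hx1Y, u1, hu1, hu1Y⟩,
      fun x hx => hx.1, ?_, ?_, ?_⟩
    · -- order-preserving on P1
      rintro x y u v ⟨hxD, hxY, z', hz', hz'Y⟩ ⟨hyD, hyY, w', hw', hw'Y⟩ hxy hu hv
      obtain ⟨z, hzx, huz⟩ := mem_pcomp.1 hu
      obtain ⟨w, hwy, hvw⟩ := mem_pcomp.1 hv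
      rw [Part.mem_unique hz' hzx] at hz'Y
      rw [Part.mem_unique hw' hwy] at hw'Y
      have hzw : z ≤ w := fOY hxY hyY hxy hzx hwy
      exact gOY hz'Y hw'Y hzw huz hvw
    · -- order-preserving on D \ P1 : contained in P2/P3-type set
      refine ordP23.mono ?_
      rintro x ⟨hxD, hxn⟩
      obtain ⟨z, hzx, hzd⟩ := dom_pcomp.1 hxD
      refine ⟨hxD, ?_⟩
      by_cases hxY : x ∈ Yf
      · by_cases hzY : z ∈ Yg
        · exact absurd ⟨hxD, hxY, z, hzx, hzY⟩ hxn
        · exact Or.inl ⟨hxY, z, hzx, hzY⟩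
      · by_cases hzY : z ∈ Yg
        · exact Or.inr ⟨hxY, z, hzx, hzY⟩
        · exact absurd (P14 x1 hx1D x hxD hx1Y hxY u1 hu1 z hzx hu1Y hzY) (fun h => h)
    · -- ideal cross condition
      rintro a b u v ⟨haD, haY, z', hz', hz'Y⟩ ⟨hbD, hbn⟩ hu hv
      obtain ⟨z, hza, huz⟩ := mem_pcomp.1 hu
      obtain ⟨w, hwb, hvw⟩ := mem_pcomp.1 hv
      rw [Part.mem_unique hz' hza] at hz'Y
      have cza := classify a haD z hza
      have cwb := classify b hbD w hwb
      by_cases hbY : b ∈ Yf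
      · have hwn : w ∉ Yg := by
          intro hwY
          exact hbn ⟨hbD, hbY, w, hwb, hwY⟩
        have hvu := (gX hz'Y ⟨cwb.1, hwn⟩ huz hvw).2
        refine ⟨?_, hvu⟩
        rcases le_or_gt a b with h | h
        · exact h
        · exfalso
          have hwz : w ≤ z := fOY hbY haY h.le hwb hza
          have hzw : z ≤ w := (gX hz'Y ⟨cwb.1, hwn⟩ huz hvw).1
          have : z = w := le_antisymm hzw hwz
          rw [this] at hz'Y
          exact hwn hz'Y
      · by_cases hwY : w ∈ Yg
        · have hf' := fX haY ⟨cwb.2, hbY⟩ hza hwb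
          exact ⟨hf'.1, gOY hwY hz'Y hf'.2 hvw huz⟩
        · exact absurd (P14 a haD b hbD haY hbY z hza w hwb hz'Y hwY) (fun h => h)
  · -- P1 is empty
    by_cases hQ : ({x | x ∈ D ∧ (x ∈ Yf ∨ ∃ u, u ∈ f x ∧ u ∈ Yg)} : Set X).Nonempty
    · refine ⟨{x | x ∈ D ∧ (x ∈ Yf ∨ ∃ u, u ∈ f x ∧ u ∈ Yg)}, hQ, fun x hx => hx.1, ?_, ?_, ?_⟩
      · -- order-preserving on Q : contained in P2/P3-type set
        refine ordP23.mono ?_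
        rintro x ⟨hxD, hxc⟩
        obtain ⟨z, hzx, hzd⟩ := dom_pcomp.1 hxD
        refine ⟨hxD, ?_⟩
        rcases hxc with hxY | ⟨u, hu, huY⟩
        · by_cases hzY : z ∈ Yg
          · exact absurd ⟨x, hxD, hxY, z, hzx, hzY⟩ hP1
          · exact Or.inl ⟨hxY, z, hzx, hzY⟩
        · by_cases hxY : x ∈ Yf
          · exact absurd ⟨x, hxD, hxY, u, hu, huY⟩ hP1
          · exact Or.inr ⟨hxY, u, hu, huY⟩
      · -- order-preserving on D \ Q : contained in P4-type set
        refine ordP4.mono ?_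
        rintro x ⟨hxD, hxn⟩
        obtain ⟨z, hzx, hzd⟩ := dom_pcomp.1 hxD
        refine ⟨hxD, fun hxY => hxn ⟨hxD, Or.inl hxY⟩, z, hzx, fun hzY =>
          hxn ⟨hxD, Or.inr ⟨z, hzx, hzY⟩⟩⟩
      · -- ideal cross condition
        rintro a b u v ⟨haD, hac⟩ ⟨hbD, hbn⟩ hu hv
        obtain ⟨z, hza, huz⟩ := mem_pcomp.1 hu
        obtain ⟨w, hwb, hvw⟩ := mem_pcomp.1 hv
        have cza := classify a haD z hza
        have cwb := classify b hbD w hwb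
        have hbnY : b ∉ Yf := fun h => hbn ⟨hbD, Or.inl h⟩
        have hwn : w ∉ Yg := fun h => hbn ⟨hbD, Or.inr ⟨w, hwb, h⟩⟩
        rcases hac with haY | ⟨u', hu', hu'Y⟩
        · have hzn : z ∉ Yg := by
            intro hzY
            exact hP1 ⟨a, haD, haY, z, hza, hzY⟩
          have hf' := fX haY ⟨cwb.2, hbnY⟩ hza hwb
          exact ⟨hf'.1, gOC ⟨cwb.1, hwn⟩ ⟨cza.1, hzn⟩ hf'.2 hvw huz⟩
        · rw [Part.mem_unique hu' hza] at hu'Y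
          have hanY : a ∉ Yf := by
            intro haY
            exact hP1 ⟨a, haD, haY, z, hza, hu'Y⟩
          have hg' := gX hu'Y ⟨cwb.1, hwn⟩ huz hvw
          refine ⟨?_, hg'.2⟩
          rcases le_or_gt a b with h | h
          · exact h
          · exfalso
            have hwz : w ≤ z := fOC ⟨cwb.2, hbnY⟩ ⟨cza.2, hanY⟩ h.le hwb hza
            have : z = w := le_antisymm hg'.1 hwz
            rw [this] at hu'Y
            exact hwn hu'Y
    · -- Q empty : all of D is of P4-type, take the whole domain
      refine ⟨D, ⟨x0, hx0⟩, fun x hx => hx, ?_, ?_, ?_⟩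
      · refine ordP4.mono ?_
        intro x hxD
        obtain ⟨z, hzx, hzd⟩ := dom_pcomp.1 hxD
        refine ⟨hxD, fun hxY => hQ ⟨x, hxD, Or.inl hxY⟩, z, hzx, fun hzY =>
          hQ ⟨x, hxD, Or.inr ⟨z, hzx, hzY⟩⟩⟩
      · rintro x y u v ⟨hxD, hxn⟩ _ _ _ _
        exact absurd hxD hxn
      · rintro a b u v _ ⟨hbD, hbn⟩ _ _
        exact absurd hbD hbn

/-- Backward direction for the `L` relation. -/
lemma L_back {f g : X →. X} (hf : IsOP f) (hg : IsOP g) (hr : f.ran = g.ran) :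
    ∃ γ : X →. X, IsOP γ ∧ g.comp γ = f := by
  obtain ⟨s, hsOP, hsDom, hsrev⟩ := exists_sel hg
  refine ⟨s.comp f, comp_isOP hf hsOP, ?_⟩
  apply PFun.ext
  intro x y
  constructor
  · intro h
    obtain ⟨z, hz, hy⟩ := mem_pcomp.1 h
    obtain ⟨u, hu, hzu⟩ := mem_pcomp.1 hz
    have hug : u ∈ g z := hsrev u z hzu
    rwa [Part.mem_unique hy hug]
  · intro hy
    have hyr : y ∈ g.ran := by rw [← hr]; exact ⟨x, hy⟩
    have hyd : y ∈ s.Dom := by rw [hsDom]; exact hyr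
    obtain ⟨z, hz⟩ := (s.mem_dom y).1 hyd
    exact mem_pcomp.2 ⟨z, mem_pcomp.2 ⟨y, hy, hz⟩, hsrev y z hz⟩

/-- Backward direction for the `R` relation. -/
lemma R_back {f g : X →. X} (hf : IsOP f) (hg : IsOP g) (hd : f.Dom = g.Dom)
    (hk : ∀ x ∈ f.Dom, ∀ y ∈ f.Dom, f x = f y → g x = g y) :
    ∃ l : X →. X, IsOP l ∧ l.comp f = g := by
  obtain ⟨s, hsOP, hsDom, hsrev⟩ := exists_sel hf
  refine ⟨g.comp s, comp_isOP hsOP hg, ?_⟩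
  apply PFun.ext
  intro x y
  constructor
  · intro h
    obtain ⟨z, hz, hy⟩ := mem_pcomp.1 h
    obtain ⟨w, hw, hyw⟩ := mem_pcomp.1 hy
    have hzw : z ∈ f w := hsrev z w hw
    have hfx : x ∈ f.Dom := (f.mem_dom x).2 ⟨z, hz⟩
    have hfw : w ∈ f.Dom := (f.mem_dom w).2 ⟨z, hzw⟩
    have hfeq : f x = f w := by
      rw [Part.eq_some_iff.2 hz, Part.eq_some_iff.2 hzw]
    rw [hk x hfx w hfw hfeq]
    exact hyw
  · intro hy
    have hxd : x ∈ f.Dom := by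
      rw [hd]; exact (g.mem_dom x).2 ⟨y, hy⟩
    obtain ⟨z, hz⟩ := (f.mem_dom x).1 hxd
    have hzr : z ∈ s.Dom := by rw [hsDom]; exact ⟨x, hz⟩
    obtain ⟨w, hw⟩ := (s.mem_dom z).1 hzr
    have hzw : z ∈ f w := hsrev z w hw
    have hfw : w ∈ f.Dom := (f.mem_dom w).2 ⟨z, hzw⟩
    have hfeq : f x = f w := by
      rw [Part.eq_some_iff.2 hz, Part.eq_some_iff.2 hzw]
    refine mem_pcomp.2 ⟨z, hz, mem_pcomp.2 ⟨w, hw, ?_⟩⟩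
    rw [← hk x hxd w hfw hfeq]
    exact hy

end Aux

/-- Green's relations `L`, `R` and `H` in the monoid `POP(X)` of orientation-preserving
partial transformations (composition written left-to-right, the left factor applied first):
`α L β` iff `Im α = Im β`; `α R β` iff `Ker α = Ker β`; `α H β` iff both. -/
theorem stmt16 (X : Type*) [LinearOrder X] (α β : X →. X)
    (hα : IsOP α) (hβ : IsOP β) :
    (((∃ γ : X →. X, IsOP γ ∧ β.comp γ = α) ∧ (∃ l : X →. X, IsOP l ∧ α.comp l = β)) ↔
       α.ran = β.ran) ∧
    (((∃ γ : X →. X, IsOP γ ∧ γ.comp β = α) ∧ (∃ l : X →. X, IsOP l ∧ l.comp α = β)) ↔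
       (α.Dom = β.Dom ∧ ∀ x ∈ α.Dom, ∀ y ∈ α.Dom, (α x = α y ↔ β x = β y))) ∧
    ((((∃ γ : X →. X, IsOP γ ∧ β.comp γ = α) ∧ (∃ l : X →. X, IsOP l ∧ α.comp l = β)) ∧
      ((∃ γ : X →. X, IsOP γ ∧ γ.comp β = α) ∧ (∃ l : X →. X, IsOP l ∧ l.comp α = β))) ↔
       (α.ran = β.ran ∧ α.Dom = β.Dom ∧
         ∀ x ∈ α.Dom, ∀ y ∈ α.Dom, (α x = α y ↔ β x = β y))) := by
  have Lfwd : ∀ {f g : X →. X}, (∃ γ : X →. X, IsOP γ ∧ g.comp γ = f) → f.ran ⊆ g.ran := by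
    rintro f g ⟨γ, _, rfl⟩ y ⟨x, hy⟩
    obtain ⟨z, _, hyz⟩ := mem_pcomp.1 hy
    exact ⟨z, hyz⟩
  have Rdom : ∀ {f g : X →. X}, (∃ γ : X →. X, IsOP γ ∧ γ.comp f = g) → g.Dom ⊆ f.Dom := by
    rintro f g ⟨γ, _, rfl⟩ x hx
    obtain ⟨z, hz, _⟩ := dom_pcomp.1 hx
    exact (f.mem_dom x).2 ⟨z, hz⟩
  have Rker : ∀ {f g : X →. X}, (∃ γ : X →. X, IsOP γ ∧ γ.comp f = g) →
      ∀ x y : X, f x = f y → g x = g y := by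
    rintro f g ⟨γ, _, rfl⟩ x y h
    simp only [PFun.comp_apply, h]
  have h1 : (((∃ γ : X →. X, IsOP γ ∧ β.comp γ = α) ∧
      (∃ l : X →. X, IsOP l ∧ α.comp l = β)) ↔ α.ran = β.ran) := by
    constructor
    · rintro ⟨hg, hl⟩
      exact Set.Subset.antisymm (Lfwd hg) (Lfwd hl)
    · intro hr
      exact ⟨L_back hα hβ hr, L_back hβ hα hr.symm⟩
  have h2 : (((∃ γ : X →. X, IsOP γ ∧ γ.comp β = α) ∧
      (∃ l : X →. X, IsOP l ∧ l.comp α = β)) ↔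
      (α.Dom = β.Dom ∧ ∀ x ∈ α.Dom, ∀ y ∈ α.Dom, (α x = α y ↔ β x = β y))) := by
    constructor
    · rintro ⟨hg, hl⟩
      refine ⟨Set.Subset.antisymm (Rdom hg) (Rdom hl), fun x _ y _ => ?_⟩
      exact ⟨fun h => Rker hl x y h, fun h => Rker hg x y h⟩
    · rintro ⟨hd, hk⟩
      constructor
      · exact R_back hβ hα hd.symm
          (fun x hx y hy h => (hk x (hd ▸ hx) y (hd ▸ hy)).2 h)
      · exact R_back hα hβ hd
          (fun x hx y hy h => (hk x hx y hy).1 h)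
  refine ⟨h1, h2, ?_⟩
  constructor
  · rintro ⟨hL, hR⟩
    exact ⟨h1.1 hL, h2.1 hR⟩
  · rintro ⟨hr, hd, hk⟩
    exact ⟨h1.2 hr, h2.2 ⟨hd, hk⟩⟩
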